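/- arXiv:1709.04629 — 2 statements merged into one kernel-verified Lean document; each statement's English description precedes it below -/
import Mathlib

section
/- If f(z) = Σ a_n zⁿ is analytic on the unit disk with |f(0)| + sup_{z∈𝔻}(1-|z|²)|f'(z)| ≤ 1, then Σ_{n≥0} |a_n| rⁿ ≤ 1 for all r ≤ R, where R ≈ 0.55356 is the positive root of 1 - R + R log(1-R) = 0. -/
open Metric Complex Finset

/-- Cauchy-Schwarz for tsums of nonnegative reals. -/
lemma my_cs_tsum {x y : ℕ → ℝ} (hx : ∀ n, 0 ≤ x n) (hy : ∀ n, 0 ≤ y n)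
    (hx2 : Summable (fun n => x n ^ 2)) (hy2 : Summable (fun n => y n ^ 2)) :
    ∑' n, x n * y n ≤ Real.sqrt (∑' n, x n ^ 2) * Real.sqrt (∑' n, y n ^ 2) := by
  have hxy : Summable fun n => x n * y n := by
    apply Summable.of_nonneg_of_le (fun n => mul_nonneg (hx n) (hy n)) (fun n => ?_) (hx2.add hy2)
    nlinarith [sq_nonneg (x n - y n)]
  refine Summable.tsum_le_of_sum_le hxy fun s => ?_
  have h1 : (∑ i ∈ s, x i * y i) ^ 2 ≤ (∑ i ∈ s, x i ^ 2) * ∑ i ∈ s, y i ^ 2 :=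
    s.sum_mul_sq_le_sq_mul_sq x y
  have h2 : (∑ i ∈ s, x i ^ 2) ≤ ∑' n, x n ^ 2 := Summable.sum_le_tsum s (fun n _ => sq_nonneg _) hx2
  have h3 : (∑ i ∈ s, y i ^ 2) ≤ ∑' n, y n ^ 2 := Summable.sum_le_tsum s (fun n _ => sq_nonneg _) hy2
  have h4 : (0:ℝ) ≤ ∑ i ∈ s, x i * y i := Finset.sum_nonneg fun i _ => mul_nonneg (hx i) (hy i)
  have h5 : (0:ℝ) ≤ ∑ i ∈ s, x i ^ 2 := Finset.sum_nonneg fun i _ => sq_nonneg _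
  have h6 : (0:ℝ) ≤ ∑ i ∈ s, y i ^ 2 := Finset.sum_nonneg fun i _ => sq_nonneg _
  have hTx : (0:ℝ) ≤ ∑' n, x n ^ 2 := tsum_nonneg fun n => sq_nonneg _
  have hTy : (0:ℝ) ≤ ∑' n, y n ^ 2 := tsum_nonneg fun n => sq_nonneg _
  calc ∑ i ∈ s, x i * y i = Real.sqrt ((∑ i ∈ s, x i * y i) ^ 2) := (Real.sqrt_sq h4).symm
    _ ≤ Real.sqrt ((∑' n, x n ^ 2) * ∑' n, y n ^ 2) :=
        Real.sqrt_le_sqrt (by nlinarith [mul_le_mul h2 h3 h6 hTx])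
    _ = Real.sqrt (∑' n, x n ^ 2) * Real.sqrt (∑' n, y n ^ 2) := Real.sqrt_mul hTx _


lemma my_geom_orth {K : ℕ} (hK : 0 < K) {n m : ℕ} (hn : n < K) (hm : m < K) :
    (∑ k ∈ range K, (Complex.exp (2 * Real.pi * Complex.I / K) ^ n
        * (starRingEnd ℂ) (Complex.exp (2 * Real.pi * Complex.I / K) ^ m)) ^ k)
      = if n = m then (K : ℂ) else 0 := by
  set ζ := Complex.exp (2 * Real.pi * Complex.I / K) with hζdef
  have hζ : IsPrimitiveRoot ζ K := Complex.isPrimitiveRoot_exp K hK.ne'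
  have hζ0 : ζ ≠ 0 := Complex.exp_ne_zero _
  have hconj : (starRingEnd ℂ) ζ = ζ⁻¹ := by
    rw [hζdef, ← Complex.exp_conj, ← Complex.exp_neg]
    congr 1
    simp [map_div₀, Complex.conj_I, map_ofNat]
    ring
  have hw : ζ ^ n * ((starRingEnd ℂ) (ζ ^ m)) = ζ ^ ((n:ℤ) - (m:ℤ)) := by
    rw [map_pow, hconj, sub_eq_add_neg, zpow_add₀ hζ0, zpow_natCast, zpow_neg, zpow_natCast,
      inv_pow]
  rw [hw]
  by_cases h : n = m
  · subst h
    simp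
  · rw [if_neg h]
    have hne : ζ ^ ((n:ℤ) - (m:ℤ)) ≠ 1 := by
      intro hcon
      have := (hζ.zpow_eq_one_iff_dvd _).1 hcon
      have h2 : ((n:ℤ) - m) ≠ 0 := by
        intro h0; apply h; omega
      have h3 : (K:ℤ) ≤ |(n:ℤ) - m| := Int.le_of_dvd (abs_pos.2 h2) ((dvd_abs _ _).2 this)
      have h4 : |(n:ℤ) - m| < K := by
        rw [abs_lt]; omega
      omega
    rw [geom_sum_eq hne]
    have hpow : (ζ ^ ((n:ℤ) - (m:ℤ))) ^ K = 1 := by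
      rw [← zpow_natCast (ζ ^ ((n:ℤ) - (m:ℤ))), ← zpow_mul, mul_comm, zpow_mul, zpow_natCast,
        hζ.pow_eq_one, one_zpow]
    rw [hpow, sub_self, zero_div]

lemma my_dparseval {K : ℕ} (hK : 0 < K) (c : ℕ → ℂ) :
    ∑ k ∈ range K, ‖∑ n ∈ range K,
        c n * (Complex.exp (2 * Real.pi * Complex.I / K) ^ k) ^ n‖ ^ 2
      = K * ∑ n ∈ range K, ‖c n‖ ^ 2 := by
  set ζ := Complex.exp (2 * Real.pi * Complex.I / K) with hζdef
  have key : ∑ k ∈ range K, ((∑ n ∈ range K, c n * (ζ ^ k) ^ n) *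
        (starRingEnd ℂ) (∑ n ∈ range K, c n * (ζ ^ k) ^ n))
      = (K : ℂ) * ∑ n ∈ range K, (c n * (starRingEnd ℂ) (c n)) := by
    have hre : ∀ k, (∑ n ∈ range K, c n * (ζ ^ k) ^ n) *
        (starRingEnd ℂ) (∑ n ∈ range K, c n * (ζ ^ k) ^ n)
        = ∑ n ∈ range K, ∑ m ∈ range K,
            (c n * (starRingEnd ℂ) (c m)) * ((ζ ^ n * (starRingEnd ℂ) (ζ ^ m)) ^ k) := by
      intro k
      rw [map_sum, Finset.sum_mul_sum]
      refine Finset.sum_congr rfl fun n _ => Finset.sum_congr rfl fun m _ => ?_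
      simp only [map_mul, map_pow]
      ring
    calc ∑ k ∈ range K, ((∑ n ∈ range K, c n * (ζ ^ k) ^ n) *
          (starRingEnd ℂ) (∑ n ∈ range K, c n * (ζ ^ k) ^ n))
        = ∑ k ∈ range K, ∑ n ∈ range K, ∑ m ∈ range K,
            (c n * (starRingEnd ℂ) (c m)) * ((ζ ^ n * (starRingEnd ℂ) (ζ ^ m)) ^ k) :=
          Finset.sum_congr rfl fun k _ => hre k
      _ = ∑ n ∈ range K, ∑ m ∈ range K,
            (c n * (starRingEnd ℂ) (c m)) * ∑ k ∈ range K, ((ζ ^ n * (starRingEnd ℂ) (ζ ^ m)) ^ k) := by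
          rw [Finset.sum_comm]
          refine Finset.sum_congr rfl fun n _ => ?_
          rw [Finset.sum_comm]
          exact Finset.sum_congr rfl fun m _ => (Finset.mul_sum _ _ _).symm
      _ = ∑ n ∈ range K, ∑ m ∈ range K,
            (c n * (starRingEnd ℂ) (c m)) * (if n = m then (K:ℂ) else 0) := by
          refine Finset.sum_congr rfl fun n hn => Finset.sum_congr rfl fun m hm => ?_
          rw [my_geom_orth hK (Finset.mem_range.1 hn) (Finset.mem_range.1 hm)]
      _ = ∑ n ∈ range K, (c n * (starRingEnd ℂ) (c n)) * (K:ℂ) := by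
          refine Finset.sum_congr rfl fun n hn => ?_
          rw [Finset.sum_eq_single n]
          · rw [if_pos rfl]
          · intro m _ hmn; rw [if_neg (fun h => hmn h.symm), mul_zero]
          · intro h; exact absurd hn h
      _ = (K : ℂ) * ∑ n ∈ range K, (c n * (starRingEnd ℂ) (c n)) := by
          rw [Finset.mul_sum]
          exact Finset.sum_congr rfl fun n _ => mul_comm _ _
  simp only [Complex.mul_conj] at key
  have key2 : ((∑ k ∈ range K, Complex.normSq (∑ n ∈ range K, c n * (ζ ^ k) ^ n) : ℝ) : ℂ)
      = ((K * ∑ n ∈ range K, Complex.normSq (c n) : ℝ) : ℂ) := by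
    push_cast
    exact key
  have key3 := Complex.ofReal_inj.1 key2
  simp only [← Complex.normSq_eq_norm_sq]
  exact key3

lemma my_bessel {c : ℕ → ℂ} {M : ℝ} (hM : 0 ≤ M)
    (hsum : Summable fun n => ‖c n‖)
    (hbd : ∀ w : ℂ, ‖w‖ = 1 → ‖∑' n, c n * w ^ n‖ ≤ M) (N : ℕ) :
    ∑ n ∈ Finset.range N, ‖c n‖ ^ 2 ≤ M ^ 2 := by
  set t : ℕ → ℝ := fun K => ∑' i, ‖c (i + K)‖ with ht
  have ht0 : ∀ K, 0 ≤ t K := fun K => tsum_nonneg fun i => norm_nonneg _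
  have htt : Filter.Tendsto t Filter.atTop (nhds 0) := by
    rw [ht]; exact tendsto_sum_nat_add fun n => ‖c n‖
  have key : ∀ K, N ≤ K → 0 < K →
      ∑ n ∈ Finset.range N, ‖c n‖ ^ 2 ≤ (M + t K) ^ 2 := by
    intro K hNK hK
    have h1 : ∑ n ∈ Finset.range N, ‖c n‖ ^ 2
        ≤ ∑ n ∈ Finset.range K, ‖c n‖ ^ 2 :=
      Finset.sum_le_sum_of_subset_of_nonneg (Finset.range_subset_range.2 hNK) fun i _ _ => sq_nonneg _
    set ζ : ℂ := Complex.exp (2 * Real.pi * Complex.I / K) with hζdef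
    have habsζ : ‖ζ‖ = 1 := by
      rw [hζdef, show (2 * (Real.pi:ℂ) * Complex.I / K) = ((2 * Real.pi / K : ℝ) : ℂ) * Complex.I
        by push_cast; ring]
      exact Complex.norm_exp_ofReal_mul_I _
    have hPk : ∀ k : ℕ, ‖∑ n ∈ Finset.range K, c n * (ζ ^ k) ^ n‖ ≤ M + t K := by
      intro k
      set w : ℂ := ζ ^ k with hwdef
      have habsw : ‖w‖ = 1 := by rw [hwdef, norm_pow, habsζ, one_pow]
      have hsw : Summable fun n => c n * w ^ n := by
        apply Summable.of_norm
        have : (fun n => ‖c n * w ^ n‖) = fun n => ‖c n‖ := by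
          funext n
          simp [norm_mul, norm_pow, habsw]
        rw [this]; exact hsum
      have hsplit := Summable.sum_add_tsum_nat_add (f := fun n => c n * w ^ n) K hsw
      have heq : ∑ n ∈ Finset.range K, c n * w ^ n
          = (∑' n, c n * w ^ n) - ∑' i, c (i + K) * w ^ (i + K) := by
        rw [← hsplit]; ring
      rw [heq]
      have htail : ‖∑' i, c (i + K) * w ^ (i + K)‖ ≤ t K := by
        rw [ht]
        have hsumtail : Summable fun i => ‖c (i + K) * w ^ (i + K)‖ := by
          have : (fun i => ‖c (i + K) * w ^ (i + K)‖) = fun i => ‖c (i + K)‖ := by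
            funext i; simp [norm_mul, norm_pow, habsw]
          rw [this]
          exact (summable_nat_add_iff K).2 hsum
        calc ‖∑' i, c (i + K) * w ^ (i + K)‖
            ≤ ∑' i, ‖c (i + K) * w ^ (i + K)‖ := norm_tsum_le_tsum_norm hsumtail
          _ = ∑' i, ‖c (i + K)‖ := by
              congr 1; funext i; simp [norm_mul, norm_pow, habsw]
      calc ‖(∑' n, c n * w ^ n) - ∑' i, c (i + K) * w ^ (i + K)‖
          ≤ ‖∑' n, c n * w ^ n‖ + ‖∑' i, c (i + K) * w ^ (i + K)‖ :=
            by simpa using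
              norm_sub_le (∑' n, c n * w ^ n) (∑' i, c (i + K) * w ^ (i + K))
        _ ≤ M + t K := add_le_add (hbd w habsw) htail
    have hd := my_dparseval hK c
    have h2 : (K:ℝ) * ∑ n ∈ Finset.range K, ‖c n‖ ^ 2 ≤ K * (M + t K) ^ 2 := by
      rw [← hd]
      calc ∑ k ∈ range K, ‖∑ n ∈ range K, c n * (ζ ^ k) ^ n‖ ^ 2
          ≤ ∑ _k ∈ range K, (M + t K) ^ 2 :=
            Finset.sum_le_sum fun k _ => pow_le_pow_left₀ (norm_nonneg _) (hPk k) 2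
        _ = K * (M + t K) ^ 2 := by simp [Finset.sum_const, nsmul_eq_mul]
    have hKpos : (0:ℝ) < K := by exact_mod_cast hK
    have h3 : ∑ n ∈ Finset.range K, ‖c n‖ ^ 2 ≤ (M + t K) ^ 2 :=
      le_of_mul_le_mul_left (by linarith [h2]) hKpos
    linarith
  have hlim : Filter.Tendsto (fun K => (M + t K) ^ 2) Filter.atTop (nhds (M ^ 2)) := by
    have h1 : Filter.Tendsto (fun K => M + t K) Filter.atTop (nhds M) := by
      simpa using (htt.const_add M)
    simpa using h1.pow 2
  refine ge_of_tendsto hlim ?_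
  filter_upwards [Filter.eventually_ge_atTop (max N 1)] with K hK
  exact key K (le_trans (le_max_left _ _) hK) (lt_of_lt_of_le (le_max_right N 1) hK)


lemma my_sum_np1_geom {q : ℝ} (hq0 : 0 ≤ q) (hq : q < 1) :
    Summable (fun n : ℕ => ((n:ℝ) + 1) * q ^ n) := by
  have h1 := summable_pow_mul_geometric_of_norm_lt_one (R := ℝ) 1
    (by rwa [Real.norm_eq_abs, _root_.abs_of_nonneg hq0])
  have h2 := summable_geometric_of_lt_one hq0 hq
  have := h1.add h2
  apply this.congr
  intro n; push_cast; ring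

lemma my_sum_n_geom {q : ℝ} (hq0 : 0 ≤ q) (hq : q < 1) :
    Summable (fun n : ℕ => (n:ℝ) * q ^ (n - 1)) := by
  rw [← summable_nat_add_iff 1]
  apply (my_sum_np1_geom hq0 hq).congr
  intro n
  simp only [Nat.add_sub_cancel]
  push_cast; ring

lemma my_coeff_bound {a : ℕ → ℂ} {f : ℂ → ℂ}
    (ha : ∀ z ∈ ball (0:ℂ) 1, HasSum (fun n : ℕ => a n * z ^ n) (f z))
    {t : ℝ} (ht0 : 0 ≤ t) (ht1 : t < 1) :
    ∃ C, 0 ≤ C ∧ ∀ n, ‖a n‖ * t ^ n ≤ C := by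
  have hmem : ((t:ℂ)) ∈ ball (0:ℂ) 1 := by
    rw [mem_ball_zero_iff, Complex.norm_of_nonneg ht0]
    exact ht1
  have hs : Summable fun n => a n * (t:ℂ) ^ n := (ha _ hmem).summable
  have h0 : Filter.Tendsto (fun n => ‖a n‖ * t ^ n) Filter.atTop (nhds 0) := by
    have h1 := hs.tendsto_atTop_zero
    have h2 := (continuous_norm.tendsto 0).comp h1
    simp only [Function.comp_def, norm_zero] at h2
    have h3 : (fun n => ‖a n * (t:ℂ) ^ n‖) = fun n => ‖a n‖ * t ^ n := by
      funext n
      rw [norm_mul, norm_pow, Complex.norm_of_nonneg ht0]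
    rwa [h3] at h2
  obtain ⟨C, hC⟩ := h0.bddAbove_range
  rw [mem_upperBounds] at hC
  refine ⟨C, ?_, fun n => hC _ ⟨n, rfl⟩⟩
  exact le_trans (by positivity) (hC _ ⟨0, rfl⟩)

lemma my_hasSum_deriv {a : ℕ → ℂ} {f : ℂ → ℂ}
    (ha : ∀ z ∈ ball (0:ℂ) 1, HasSum (fun n : ℕ => a n * z ^ n) (f z))
    {z : ℂ} (hz : ‖z‖ < 1) :
    HasSum (fun n : ℕ => ((n:ℂ) + 1) * a (n + 1) * z ^ n) (deriv f z) := by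
  have habs0 : 0 ≤ ‖z‖ := norm_nonneg z
  set t : ℝ := (‖z‖ + 1) / 2 with htdef
  have hzt : ‖z‖ < t := by rw [htdef]; linarith
  have ht1 : t < 1 := by rw [htdef]; linarith
  have ht0 : 0 < t := by rw [htdef]; linarith
  set t' : ℝ := (t + 1) / 2 with ht'def
  have htt' : t < t' := by rw [ht'def]; linarith
  have ht'1 : t' < 1 := by rw [ht'def]; linarith
  have ht'0 : 0 < t' := by linarith
  obtain ⟨C, hC0, hCb⟩ := my_coeff_bound ha ht'0.le ht'1
  set u : ℕ → ℝ := fun n => C / t' * ((n:ℝ) * (t / t') ^ (n - 1)) with hudef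
  have hu : Summable u := (my_sum_n_geom (by positivity) (by
      rw [div_lt_one ht'0]; exact htt')).mul_left _
  have hub : ∀ (n : ℕ) (w : ℂ), ‖w‖ ≤ t →
      ‖a n * ((n:ℂ) * w ^ (n - 1))‖ ≤ u n := by
    intro n w hw
    rw [norm_mul, norm_mul, norm_pow, Complex.norm_natCast]
    have hAn : ‖a n‖ ≤ C / t' ^ n := by
      rw [le_div_iff₀ (by positivity)]
      exact hCb n
    match n with
    | 0 => simp [hudef]
    | (m + 1) =>
      have h1 : ‖w‖ ^ m ≤ t ^ m := pow_le_pow_left₀ (norm_nonneg w) hw m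
      have hu1 : u (m+1) = C / t' ^ (m+1) * (((m+1 : ℕ)) : ℝ) * t ^ m := by
        simp only [hudef, Nat.add_sub_cancel]
        rw [div_pow]
        field_simp
        ring
      show ‖a (m+1)‖ * ((((m+1) : ℕ) : ℝ) * ‖w‖ ^ (m+1-1)) ≤ u (m+1)
      rw [hu1]
      simp only [Nat.add_sub_cancel]
      calc ‖a (m+1)‖ * ((((m+1) : ℕ) : ℝ) * ‖w‖ ^ m)
          = (‖a (m+1)‖ * (((m+1) : ℕ) : ℝ)) * ‖w‖ ^ m := by ring
        _ ≤ (C / t' ^ (m+1) * (((m+1) : ℕ) : ℝ)) * t ^ m := by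
            apply mul_le_mul _ h1 (by positivity) (by positivity)
            exact mul_le_mul_of_nonneg_right hAn (by positivity)
        _ = C / t' ^ (m+1) * (((m+1 : ℕ)) : ℝ) * t ^ m := by ring
  have hds : HasDerivAt (fun w => ∑' n, a n * w ^ n) (∑' n, a n * ((n:ℂ) * z ^ (n - 1))) z := by
    apply hasDerivAt_tsum_of_isPreconnected hu (isOpen_ball (x := (0:ℂ)) (ε := t))
      ((convex_ball (0:ℂ) t).isPreconnected)
      (g := fun n w => a n * w ^ n) (g' := fun n w => a n * ((n:ℂ) * w ^ (n - 1)))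
      (fun n w _ => (hasDerivAt_pow n w).const_mul (a n))
      (fun n w hw => hub n w (by rw [mem_ball_zero_iff] at hw; exact hw.le))
      (y₀ := 0) (by rw [mem_ball_zero_iff]; simpa using ht0)
      ((hasSum_single (f := fun n => a n * (0:ℂ) ^ n) 0 (by
        intro b hb; simp [zero_pow hb])).summable)
      (by rw [mem_ball_zero_iff]; exact hzt)
  have hfz : HasDerivAt f (∑' n, a n * ((n:ℂ) * z ^ (n - 1))) z := by
    apply hds.congr_of_eventuallyEq
    filter_upwards [isOpen_ball.mem_nhds (show z ∈ ball (0:ℂ) 1 by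
      rw [mem_ball_zero_iff]; exact hz)] with w hw
    exact ((ha w hw).tsum_eq).symm
  have hsz : Summable fun n => a n * ((n:ℂ) * z ^ (n - 1)) := by
    apply Summable.of_norm
    exact Summable.of_nonneg_of_le (fun n => norm_nonneg _) (fun n => hub n z hzt.le) hu
  have hS : HasSum (fun n => a n * ((n:ℂ) * z ^ (n - 1))) (deriv f z) := by
    rw [hfz.deriv]
    exact hsz.hasSum
  have hS1 : HasSum (fun n : ℕ => a (n+1) * (((n+1 : ℕ) : ℂ) * z ^ (n+1-1))) (deriv f z) := by
    apply (hasSum_nat_add_iff (f := fun n => a n * ((n:ℂ) * z ^ (n - 1))) 1).2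
    convert hS using 1
    rfl
    simp
  have heq : (fun n : ℕ => ((n:ℂ) + 1) * a (n + 1) * z ^ n)
      = fun n : ℕ => a (n+1) * (((n+1 : ℕ) : ℂ) * z ^ (n+1-1)) := by
    funext n
    simp only [Nat.add_sub_cancel]
    push_cast
    ring
  rw [heq]
  exact hS1

set_option maxHeartbeats 1000000 in
theorem bohr_stmt_17 (a : ℕ → ℂ) (f : ℂ → ℂ)
    (hf : AnalyticOn ℂ f (ball (0:ℂ) 1))
    (ha : ∀ z ∈ ball (0:ℂ) 1, HasSum (fun n : ℕ => a n * z ^ n) (f z))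
    (hbloch : ∀ z ∈ ball (0:ℂ) 1,
      ‖f 0‖ + (1 - (‖z‖)^2) * ‖deriv f z‖ ≤ 1)
    (R : ℝ) (hR0 : 0 < R) (hR1 : R < 1)
    (hroot : 1 - R + R * Real.log (1 - R) = 0)
    (r : ℝ) (hr0 : 0 ≤ r) (hr : r ≤ R) :
    ∑' n : ℕ, ‖a n‖ * r ^ n ≤ 1 := by
  have hmem0 : (0:ℂ) ∈ ball (0:ℂ) 1 := mem_ball_self one_pos
  have hf0 : f 0 = a 0 := by
    have h1 := ha 0 hmem0
    have h2 : HasSum (fun n : ℕ => a n * (0:ℂ) ^ n) (a 0) := by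
      have h3 := hasSum_single (f := fun n : ℕ => a n * (0:ℂ) ^ n) 0
        (by intro b hb; simp [zero_pow hb])
      simpa using h3
    exact h1.unique h2
  have hbloch0 := hbloch 0 hmem0
  have hA0le : ‖a 0‖ ≤ 1 := by
    rw [← hf0]
    have h2 : 0 ≤ (1 - (‖(0:ℂ)‖)^2) * ‖deriv f 0‖ := by
      simp only [norm_zero]
      positivity
    linarith
  set M : ℝ := 1 - ‖a 0‖ with hM
  have hM0 : 0 ≤ M := by rw [hM]; linarith
  rcases eq_or_lt_of_le hr0 with hr00 | hrpos
  · rw [← hr00]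
    have h2 : HasSum (fun n : ℕ => ‖a n‖ * (0:ℝ) ^ n) (‖a 0‖) := by
      have h3 := hasSum_single (f := fun n : ℕ => ‖a n‖ * (0:ℝ) ^ n) 0
        (by intro b hb; simp [zero_pow hb])
      simpa using h3
    rw [h2.tsum_eq]
    exact hA0le
  have hr1 : r < 1 := lt_of_le_of_lt hr hR1
  have hd : ∀ w : ℂ, ‖w‖ < 1 →
      (1 - (‖w‖)^2) * ‖deriv f w‖ ≤ M := by
    intro w hw
    have h1 := hbloch w (by rw [mem_ball_zero_iff]; exact hw)
    rw [hM, ← hf0]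
    linarith
  have parseval : ∀ ρ : ℝ, 0 ≤ ρ → ρ < 1 → ∀ N : ℕ,
      ∑ n ∈ range N, (((n:ℝ)+1) * ‖a (n+1)‖ * ρ^n)^2 ≤ (M / (1 - ρ^2))^2 := by
    intro ρ hρ0 hρ1 N
    have hden : 0 < 1 - ρ^2 := by nlinarith
    set c : ℕ → ℂ := fun n => ((n:ℂ)+1) * a (n+1) * (ρ:ℂ)^n with hc
    have habsc : ∀ n, ‖c n‖ = ((n:ℝ)+1) * ‖a (n+1)‖ * ρ^n := by
      intro n
      rw [hc]
      simp only [norm_mul, norm_pow, Complex.norm_of_nonneg hρ0]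
      congr 2
      rw [show ((n:ℂ)+1) = (((n+1:ℕ)):ℂ) by push_cast; ring, Complex.norm_natCast]
      push_cast; ring
    have hsumc : Summable fun n => ‖c n‖ := by
      set t' : ℝ := (1+ρ)/2 with ht'
      have ht'0 : 0 < t' := by rw [ht']; linarith
      have ht'1 : t' < 1 := by rw [ht']; linarith
      have hρt' : ρ < t' := by rw [ht']; linarith
      obtain ⟨C, hC0, hCb⟩ := my_coeff_bound ha ht'0.le ht'1
      clear_value t'
      apply Summable.of_nonneg_of_le (fun n => by rw [habsc n]; positivity) (fun n => ?_)
        ((my_sum_np1_geom (q := ρ/t') (by positivity)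
          (by rw [div_lt_one ht'0]; exact hρt')).mul_left (C/t'))
      rw [habsc n]
      have hAn : ‖a (n+1)‖ ≤ C / t' ^ (n+1) := by
        rw [le_div_iff₀ (by positivity)]
        exact hCb (n+1)
      calc ((n:ℝ)+1) * ‖a (n+1)‖ * ρ^n
          ≤ ((n:ℝ)+1) * (C / t' ^ (n+1)) * ρ^n := by
            apply mul_le_mul_of_nonneg_right _ (by positivity)
            exact mul_le_mul_of_nonneg_left hAn (by positivity)
        _ = C/t' * (((n:ℝ)+1) * (ρ/t')^n) := by
            rw [div_pow, pow_succ]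
            field_simp
    have hbd : ∀ w : ℂ, ‖w‖ = 1 →
        ‖∑' n, c n * w^n‖ ≤ M / (1-ρ^2) := by
      intro w hw
      have habsρw : ‖(ρ:ℂ) * w‖ = ρ := by
        rw [norm_mul, Complex.norm_of_nonneg hρ0, hw, mul_one]
      have hlt : ‖(ρ:ℂ)*w‖ < 1 := by rw [habsρw]; exact hρ1
      have hds := my_hasSum_deriv ha hlt
      have heq : (fun n : ℕ => c n * w^n) = fun n : ℕ => ((n:ℂ)+1) * a (n+1) * ((ρ:ℂ)*w)^n := by
        funext n; rw [hc]; rw [mul_pow]; ring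
      rw [heq, hds.tsum_eq]
      have h1 := hd ((ρ:ℂ)*w) hlt
      rw [habsρw] at h1
      rw [le_div_iff₀ hden]
      linarith
    have hbes := my_bessel (M := M/(1-ρ^2)) (by positivity) hsumc hbd N
    calc ∑ n ∈ range N, (((n:ℝ)+1) * ‖a (n+1)‖ * ρ^n)^2
        = ∑ n ∈ range N, ‖c n‖ ^ 2 :=
          Finset.sum_congr rfl fun n _ => by rw [habsc n]
      _ ≤ (M/(1-ρ^2))^2 := hbes
  have step4 : ∀ N : ℕ, ∑ n ∈ range N, ((n:ℝ)+1) * ‖a (n+1)‖^2 * r^(n+1)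
      ≤ M^2 * r / (1-r) := by
    intro N
    set s := Real.sqrt r with hs
    have hs0 : 0 ≤ s := Real.sqrt_nonneg r
    have hs2 : s^2 = r := Real.sq_sqrt hr0
    have hs1 : s < 1 := by nlinarith
    have hterm : ∀ n : ℕ, (∫ ρ in (0:ℝ)..s, ((((n:ℝ)+1) * ‖a (n+1)‖ * ρ^n)^2 * (2*ρ)))
        = ((n:ℝ)+1) * ‖a (n+1)‖^2 * r^(n+1) := by
      intro n
      have h1 : (fun ρ : ℝ => (((n:ℝ)+1) * ‖a (n+1)‖ * ρ^n)^2 * (2*ρ))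
          = fun ρ : ℝ => (((n:ℝ)+1)^2 * ‖a (n+1)‖^2 * 2) * ρ^(2*n+1) := by
        funext ρ; ring
      rw [h1, intervalIntegral.integral_const_mul, integral_pow]
      rw [show 2*n+1+1 = 2*(n+1) by ring, pow_mul, hs2]
      rw [zero_pow (by omega)]
      field_simp
      push_cast
      ring
    have hintL : ∀ n ∈ range N, IntervalIntegrable
        (fun ρ : ℝ => (((n:ℝ)+1) * ‖a (n+1)‖ * ρ^n)^2 * (2*ρ))
        MeasureTheory.volume 0 s := by
      intro n _
      exact (Continuous.intervalIntegrable (by fun_prop) _ _)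
    have hcontR : ContinuousOn (fun ρ : ℝ => (M/(1-ρ^2))^2 * (2*ρ)) (Set.uIcc 0 s) := by
      apply ContinuousOn.mul
      · apply ContinuousOn.pow
        apply ContinuousOn.div continuousOn_const (by fun_prop)
        intro x hx
        rw [Set.uIcc_of_le hs0] at hx
        obtain ⟨hx0, hx1⟩ := hx
        nlinarith
      · fun_prop
    have hintR : IntervalIntegrable (fun ρ : ℝ => (M/(1-ρ^2))^2 * (2*ρ))
        MeasureTheory.volume 0 s := hcontR.intervalIntegrable
    have hFTC : (∫ ρ in (0:ℝ)..s, (M/(1-ρ^2))^2 * (2*ρ)) = M^2 * r/(1-r) := by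
      have hF : ∀ ρ ∈ Set.uIcc (0:ℝ) s, HasDerivAt (fun x : ℝ => M^2 * (1-x^2)⁻¹)
          ((M/(1-ρ^2))^2 * (2*ρ)) ρ := by
        intro ρ hρ
        rw [Set.uIcc_of_le hs0] at hρ
        have hρ1 : 1 - ρ^2 ≠ 0 := by nlinarith [hρ.1, hρ.2]
        have h1 : HasDerivAt (fun x : ℝ => 1 - x^2) (-(2*ρ)) ρ := by
          have h2 := (hasDerivAt_pow 2 ρ).const_sub 1
          exact h2.congr_deriv (by push_cast; ring)
        have h2 := (h1.inv hρ1).const_mul (M^2)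
        exact h2.congr_deriv (by rw [div_pow]; ring)
      rw [intervalIntegral.integral_eq_sub_of_hasDerivAt hF hintR]
      have h3 : (1:ℝ) - s^2 ≠ 0 := by nlinarith
      rw [hs2] at h3
      rw [hs2]
      field_simp
      ring
    calc ∑ n ∈ range N, ((n:ℝ)+1) * ‖a (n+1)‖^2 * r^(n+1)
        = ∑ n ∈ range N, (∫ ρ in (0:ℝ)..s,
            ((((n:ℝ)+1) * ‖a (n+1)‖ * ρ^n)^2 * (2*ρ))) :=
          Finset.sum_congr rfl fun n _ => (hterm n).symm
      _ = ∫ ρ in (0:ℝ)..s, (∑ n ∈ range N,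
            (((n:ℝ)+1) * ‖a (n+1)‖ * ρ^n)^2 * (2*ρ)) :=
          (intervalIntegral.integral_finset_sum hintL).symm
      _ ≤ ∫ ρ in (0:ℝ)..s, (M/(1-ρ^2))^2 * (2*ρ) := by
          apply intervalIntegral.integral_mono_on hs0
            ((Continuous.intervalIntegrable (by fun_prop) _ _)) hintR
          intro ρ hρ
          obtain ⟨hρ0, hρs⟩ := hρ
          have hρ1 : ρ < 1 := lt_of_le_of_lt hρs hs1
          rw [← Finset.sum_mul]
          exact mul_le_mul_of_nonneg_right (parseval ρ hρ0 hρ1 N) (by positivity)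
      _ = M^2 * r/(1-r) := hFTC
  set t1 : ℝ := (1+R)/2 with ht1def
  have ht1R : R < t1 := by rw [ht1def]; linarith
  have ht1lt : t1 < 1 := by rw [ht1def]; linarith
  have ht1pos : 0 < t1 := by rw [ht1def]; linarith
  have hrt2 : r < t1^2 := by rw [ht1def]; nlinarith
  obtain ⟨C, hC0, hCb⟩ := my_coeff_bound ha ht1pos.le ht1lt
  clear_value t1
  have hsumA : Summable (fun n => ‖a n‖ * r^n) := by
    apply Summable.of_nonneg_of_le (fun n => by positivity) (fun n => ?_)
      ((summable_geometric_of_lt_one (r := r/t1) (by positivity)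
        (by rw [div_lt_one ht1pos]; linarith)).mul_left C)
    have hAn : ‖a n‖ ≤ C / t1 ^ n := by
      rw [le_div_iff₀ (by positivity)]
      exact hCb n
    calc ‖a n‖ * r^n ≤ (C / t1^n) * r^n :=
          mul_le_mul_of_nonneg_right hAn (by positivity)
      _ = C * (r/t1)^n := by rw [div_pow]; field_simp
  set x : ℕ → ℝ := fun n => Real.sqrt (((n:ℝ)+1) * ‖a (n+1)‖^2 * r^(n+1)) with hx
  set y : ℕ → ℝ := fun n => Real.sqrt (r^(n+1) / ((n:ℝ)+1)) with hy
  have hxy : ∀ n, x n * y n = ‖a (n+1)‖ * r^(n+1) := by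
    intro n
    rw [hx, hy]
    simp only
    rw [← Real.sqrt_mul (by positivity)]
    have h1 : ((n:ℝ)+1) * ‖a (n+1)‖^2 * r^(n+1) * (r^(n+1)/((n:ℝ)+1))
        = (‖a (n+1)‖ * r^(n+1))^2 := by
      field_simp
    rw [h1, Real.sqrt_sq (by positivity)]
  have hx2 : ∀ n, x n ^ 2 = ((n:ℝ)+1) * ‖a (n+1)‖^2 * r^(n+1) :=
    fun n => Real.sq_sqrt (by positivity)
  have hy2 : ∀ n, y n ^ 2 = r^(n+1)/((n:ℝ)+1) :=
    fun n => Real.sq_sqrt (by positivity)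
  have hsx2 : Summable fun n => x n ^ 2 := by
    simp only [hx2]
    set q : ℝ := r/t1^2 with hq
    have hq0 : 0 ≤ q := by positivity
    have hq1 : q < 1 := by rw [hq, div_lt_one (by positivity)]; exact hrt2
    apply Summable.of_nonneg_of_le (fun n => by positivity) (fun n => ?_)
      ((my_sum_np1_geom hq0 hq1).mul_left (C^2*q))
    have hAn : ‖a (n+1)‖ ≤ C / t1 ^ (n+1) := by
      rw [le_div_iff₀ (by positivity)]
      exact hCb (n+1)
    have hAn2 : ‖a (n+1)‖^2 ≤ (C / t1 ^ (n+1))^2 :=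
      pow_le_pow_left₀ (norm_nonneg _) hAn 2
    calc ((n:ℝ)+1) * ‖a (n+1)‖^2 * r^(n+1)
        ≤ ((n:ℝ)+1) * (C / t1^(n+1))^2 * r^(n+1) := by
          apply mul_le_mul_of_nonneg_right _ (by positivity)
          exact mul_le_mul_of_nonneg_left hAn2 (by positivity)
      _ = C^2*q * (((n:ℝ)+1) * q^n) := by
          rw [hq]
          have ht1ne : t1 ≠ 0 := ne_of_gt ht1pos
          simp only [div_pow, ← pow_mul]
          field_simp
          ring
  have hsy2 : Summable fun n => y n ^ 2 := by
    simp only [hy2]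
    apply Summable.of_nonneg_of_le (fun n => by positivity) (fun n => ?_)
      ((summable_geometric_of_lt_one hr0 hr1).mul_left r)
    rw [div_le_iff₀ (by positivity)]
    have hge1 : (1:ℝ) ≤ (n:ℝ) + 1 := by
      have := Nat.cast_nonneg (α := ℝ) n
      linarith
    calc r^(n+1) ≤ r^(n+1) * ((n:ℝ)+1) := le_mul_of_one_le_right (by positivity) hge1
      _ = r * r^n * ((n:ℝ)+1) := by ring
  have hT : ∑' n, ‖a (n+1)‖ * r^(n+1) ≤ M := by
    have hcs := my_cs_tsum (x := x) (y := y) (fun n => Real.sqrt_nonneg _)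
      (fun n => Real.sqrt_nonneg _) hsx2 hsy2
    have he1 : ∑' n, ‖a (n+1)‖ * r^(n+1) = ∑' n, x n * y n :=
      tsum_congr fun n => (hxy n).symm
    have h1 : ∑' n, x n ^ 2 ≤ M^2 * r/(1-r) := by
      apply Summable.tsum_le_of_sum_range_le hsx2
      intro N
      calc ∑ n ∈ range N, x n ^ 2
          = ∑ n ∈ range N, ((n:ℝ)+1) * ‖a (n+1)‖^2 * r^(n+1) :=
            Finset.sum_congr rfl fun n _ => hx2 n
        _ ≤ M^2 * r/(1-r) := step4 N
    have h2 : ∑' n, y n ^ 2 = -Real.log (1-r) := by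
      have h3 := Real.hasSum_pow_div_log_of_abs_lt_one (x := r)
        (by rw [_root_.abs_of_nonneg hr0]; exact hr1)
      rw [show (fun n => y n ^ 2) = fun n : ℕ => r^(n+1)/((n:ℝ)+1) from funext hy2]
      exact h3.tsum_eq
    have hlog : -Real.log (1-r) ≤ (1-r)/r := by
      set g : ℝ → ℝ := fun x => 1 - x + x * Real.log (1-x) with hg
      have hdg : ∀ x : ℝ, x < 1 → HasDerivAt g (-1 + (Real.log (1-x) + x * (-1/(1-x)))) x := by
        intro x hx
        have h1' : HasDerivAt (fun y : ℝ => 1 - y) (-1) x := by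
          simpa using ((hasDerivAt_id x).const_sub 1)
        have h2' : HasDerivAt (fun y : ℝ => Real.log (1 - y)) (-1/(1-x)) x := by
          have h4 := h1'.log (by intro h0; rw [sub_eq_zero] at h0; exact absurd h0.symm (ne_of_lt hx))
          simpa using h4
        have h3' := (hasDerivAt_id x).mul h2'
        have h5 := h1'.add h3'
        exact h5.congr_deriv (by simp only [id_eq]; ring)
      have hganti : AntitoneOn g (Set.Icc 0 R) := by
        apply antitoneOn_of_deriv_nonpos (convex_Icc 0 R)
        · intro x hx
          exact ((hdg x (lt_of_le_of_lt hx.2 hR1)).continuousAt).continuousWithinAt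
        · intro x hx
          rw [interior_Icc] at hx
          exact ((hdg x (lt_trans hx.2 hR1)).differentiableAt).differentiableWithinAt
        · intro x hx
          rw [interior_Icc] at hx
          obtain ⟨hxa, hxb⟩ := hx
          have hx1 : x < 1 := lt_trans hxb hR1
          rw [(hdg x hx1).deriv]
          have hlogneg : Real.log (1-x) ≤ 0 := Real.log_nonpos (by linarith) (by linarith)
          have h5 : (0:ℝ) < 1 - x := by linarith
          have h6 : 0 ≤ x * (1/(1-x)) :=
            mul_nonneg hxa.le (le_of_lt (one_div_pos.2 h5))
          have h8 : x * (-1/(1-x)) ≤ 0 := by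
            have h7 : x * (-1/(1-x)) = -(x * (1/(1-x))) := by ring
            rw [h7]
            linarith
          linarith [h6, hlogneg, h8]
      have hgr := hganti (Set.mem_Icc.2 ⟨hr0, hr⟩) (Set.mem_Icc.2 ⟨hR0.le, le_refl R⟩) hr
      have hgR : g R = 0 := by rw [hg]; exact hroot
      rw [hgR] at hgr
      rw [hg] at hgr
      simp only at hgr
      rw [le_div_iff₀ hrpos]
      nlinarith [hgr]
    have hfin : Real.sqrt (∑' n, x n ^ 2) * Real.sqrt (∑' n, y n ^ 2) ≤ M := by
      calc Real.sqrt (∑' n, x n ^ 2) * Real.sqrt (∑' n, y n ^ 2)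
          ≤ Real.sqrt (M^2 * r/(1-r)) * Real.sqrt ((1-r)/r) := by
            apply mul_le_mul (Real.sqrt_le_sqrt h1) _ (Real.sqrt_nonneg _) (Real.sqrt_nonneg _)
            rw [h2]
            exact Real.sqrt_le_sqrt hlog
        _ = Real.sqrt ((M^2 * r/(1-r)) * ((1-r)/r)) := (Real.sqrt_mul (by
              have h1r : (0:ℝ) < 1 - r := by linarith
              positivity) _).symm
        _ = Real.sqrt (M^2) := by
            congr 1
            have h8 : (1:ℝ) - r ≠ 0 := by linarith
            field_simp
            try ring
        _ = M := by rw [Real.sqrt_sq hM0]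
    rw [he1]
    exact le_trans hcs hfin
  have hsplit := Summable.sum_add_tsum_nat_add (f := fun n => ‖a n‖ * r^n) 1 hsumA
  rw [← hsplit]
  have h9 : ∑ i ∈ range 1, ‖a i‖ * r ^ i = ‖a 0‖ := by
    simp
  rw [h9]
  have h10 : ∑' (i : ℕ), ‖a (i+1)‖ * r ^ (i+1) ≤ M := hT
  rw [hM] at h10
  linarith [h10]
end

section
/- For the function f(z) = (3√3/4)(((z-a)/(1-az))² - a²) with a ∈ (0,1), one has f'(z) = (3√3/2)((z-a)/(1-az))·(1-a²)/(1-az)², the Bloch norm satisfies sup_{z∈𝔻}(1-|z|²)|f'(z)| = 1, and Σ_{n≥0} |a_n| rⁿ = (3√3/4)(((r-a)/(1-ar))² - a² + 4a(1-a²)r) whenever a ∈ (0, 1/√3) (all coefficients a_n for n ≥ 2 being positive). -/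
open Metric Complex

set_option maxHeartbeats 1000000 in
theorem bohr_stmt_19 (a : ℝ) (ha0 : 0 < a) (ha1 : a < 1)
    (f : ℂ → ℂ)
    (hf : ∀ z : ℂ, f z =
      ((3 * Real.sqrt 3 / 4 : ℝ) : ℂ) * (((z - (a:ℂ)) / (1 - (a:ℂ) * z)) ^ 2 - (a:ℂ) ^ 2))
    (A : ℕ → ℂ)
    (hA0 : A 0 = 0)
    (hA1 : A 1 = ((3 * Real.sqrt 3 / 4 : ℝ) : ℂ) * (-2 * (a:ℂ) * (1 - (a:ℂ) ^ 2)))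
    (hAn : ∀ n : ℕ, 2 ≤ n → A n =
      ((3 * Real.sqrt 3 / 4 : ℝ) : ℂ) * (1 - (a:ℂ) ^ 2) *
        (((n : ℂ)) * (1 - (a:ℂ) ^ 2) - (1 + (a:ℂ) ^ 2)) * (a:ℂ) ^ (n - 2)) :
    (∀ z ∈ ball (0:ℂ) 1, deriv f z =
      ((3 * Real.sqrt 3 / 2 : ℝ) : ℂ) * ((z - (a:ℂ)) / (1 - (a:ℂ) * z)) *
        ((1 - (a:ℂ) ^ 2) / (1 - (a:ℂ) * z) ^ 2)) ∧
    IsLUB ((fun z : ℂ => (1 - (‖z‖)^2) * ‖deriv f z‖) ''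
      ball (0:ℂ) 1) 1 ∧
    (a < 1 / Real.sqrt 3 →
      ∀ r : ℝ, 0 ≤ r → r < 1 →
        ∑' n : ℕ, ‖A n‖ * r ^ n =
          (3 * Real.sqrt 3 / 4) *
            (((r - a) / (1 - a * r)) ^ 2 - a ^ 2 + 4 * a * (1 - a ^ 2) * r)) := by
  -- derivative formula (part 1)
  have hderiv : ∀ z ∈ ball (0:ℂ) 1, deriv f z =
      ((3 * Real.sqrt 3 / 2 : ℝ) : ℂ) * ((z - (a:ℂ)) / (1 - (a:ℂ) * z)) *
        ((1 - (a:ℂ) ^ 2) / (1 - (a:ℂ) * z) ^ 2) := by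
    have hfe : f = fun z => ((3 * Real.sqrt 3 / 4 : ℝ) : ℂ) *
        (((z - (a:ℂ)) / (1 - (a:ℂ) * z)) ^ 2 - (a:ℂ) ^ 2) := funext hf
    subst hfe
    intro z hz
    have hz1 : ‖z‖ < 1 := by simpa [mem_ball, Complex.dist_eq] using hz
    have hne : (1 : ℂ) - (a:ℂ) * z ≠ 0 := by
      intro h
      have h1 : (1:ℂ) = (a:ℂ) * z := by linear_combination h
      have : ‖(a:ℂ) * z‖ = 1 := by rw [← h1]; simp
      rw [norm_mul, Complex.norm_real, Real.norm_eq_abs, abs_of_pos ha0] at this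
      nlinarith [norm_nonneg z]
    have hg : HasDerivAt (fun z : ℂ => (z - (a:ℂ)) / (1 - (a:ℂ) * z))
        ((1 - (a:ℂ)^2) / (1 - (a:ℂ) * z)^2) z := by
      have h1 : HasDerivAt (fun z : ℂ => z - (a:ℂ)) 1 z := (hasDerivAt_id z).sub_const _
      have h2 : HasDerivAt (fun z : ℂ => 1 - (a:ℂ) * z) (-(a:ℂ)) z := by
        simpa using ((hasDerivAt_id z).const_mul (a:ℂ)).const_sub 1
      have := h1.fun_div h2 hne
      refine this.congr_deriv ?_
      ring
    have hF : HasDerivAt (fun z : ℂ => ((3 * Real.sqrt 3 / 4 : ℝ) : ℂ) *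
        (((z - (a:ℂ)) / (1 - (a:ℂ) * z)) ^ 2 - (a:ℂ) ^ 2))
        (((3 * Real.sqrt 3 / 4 : ℝ) : ℂ) *
          (2 * ((z - (a:ℂ)) / (1 - (a:ℂ) * z)) ^ 1 * ((1 - (a:ℂ)^2) / (1 - (a:ℂ) * z)^2))) z :=
      ((hg.pow 2).sub_const _).const_mul _
    rw [hF.deriv]
    push_cast
    ring
  refine ⟨hderiv, ?_, ?_⟩
  · -- part 2 : the Bloch seminorm is exactly 1
    set q := Real.sqrt 3 with hqdef
    have hq3 : q ^ 2 = 3 := Real.sq_sqrt (by norm_num)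
    have hq1 : 1 < q := by nlinarith [Real.sqrt_nonneg 3]
    have hq0 : 0 < q := by linarith
    have hid : ∀ z : ℂ, (‖1 - (a:ℂ) * z‖)^2 - (‖z - (a:ℂ)‖)^2
        = (1 - a^2) * (1 - (‖z‖)^2) := by
      intro z
      simp only [Complex.sq_norm, Complex.normSq_apply, Complex.sub_re, Complex.sub_im,
        Complex.mul_re, Complex.mul_im, Complex.ofReal_re, Complex.ofReal_im,
        Complex.one_re, Complex.one_im]
      ring
    have hne : ∀ z ∈ ball (0:ℂ) 1, (1 : ℂ) - (a:ℂ) * z ≠ 0 := by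
      intro z hz h
      have hz1 : ‖z‖ < 1 := by simpa [mem_ball, Complex.dist_eq] using hz
      have h1 : (1:ℂ) = (a:ℂ) * z := by linear_combination h
      have : ‖(a:ℂ) * z‖ = 1 := by rw [← h1]; simp
      rw [norm_mul, Complex.norm_real, Real.norm_eq_abs, abs_of_pos ha0] at this
      nlinarith [norm_nonneg z]
    have habs : ∀ z ∈ ball (0:ℂ) 1,
        (1 - (‖z‖)^2) * ‖deriv f z‖
        = (3 * q / 2) * (‖z - (a:ℂ)‖ *
            ((‖1 - (a:ℂ) * z‖)^2 - (‖z - (a:ℂ)‖)^2)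
            / (‖1 - (a:ℂ) * z‖)^3) := by
      intro z hz
      have hz1 : ‖z‖ < 1 := by simpa [mem_ball, Complex.dist_eq] using hz
      have hm0 : 0 < ‖1 - (a:ℂ) * z‖ := by
        simpa [norm_pos_iff] using hne z hz
      rw [hderiv z hz, hid z]
      rw [norm_mul, norm_mul, norm_div, norm_div, norm_pow]
      rw [Complex.norm_real, Real.norm_eq_abs]
      have h1 : ‖(1:ℂ) - (a:ℂ)^2‖ = 1 - a^2 := by
        rw [show ((1:ℂ) - (a:ℂ)^2) = ((1 - a^2 : ℝ) : ℂ) by push_cast; ring,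
          Complex.norm_real, Real.norm_eq_abs, abs_of_pos (by nlinarith)]
      rw [h1, abs_of_pos (by positivity)]
      field_simp
    constructor
    · rintro y ⟨z, hz, rfl⟩
      simp only
      rw [habs z hz]
      set s := ‖z - (a:ℂ)‖ with hs
      set m := ‖1 - (a:ℂ) * z‖ with hm
      have hs0 : 0 ≤ s := norm_nonneg _
      have hm0 : 0 < m := by simpa [hm, norm_pos_iff] using hne z hz
      have key : 3 * q * (s * (m^2 - s^2)) ≤ 2 * m^3 := by
        have hfac : 2*m^3 - 3*q*(s*(m^2-s^2)) = (q*s - m)^2 * (q*s + 2*m) := by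
          linear_combination (-(q*s^3)) * hq3
        nlinarith [mul_nonneg (sq_nonneg (q*s - m))
          (add_nonneg (mul_nonneg hq0.le hs0) (by linarith : (0:ℝ) ≤ 2*m))]
      have h2 : (3 * q / 2) * (s * (m^2 - s^2) / m^3) = 3*q*(s*(m^2-s^2)) / (2*m^3) := by
        ring
      rw [h2, div_le_one (by positivity)]
      linarith
    · intro b hb
      have h1a : 0 < 1 - a^2 := by nlinarith
      set z₀ : ℝ := (q * a + 1) / (q + a) with hz₀def
      have hden : 0 < q + a := by linarith
      have hz₀pos : 0 < z₀ := by positivity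
      have hz₀lt : z₀ < 1 := by
        rw [div_lt_one hden]; nlinarith
      have hmem : ((z₀ : ℝ) : ℂ) ∈ ball (0:ℂ) 1 := by
        simp [mem_ball, Complex.dist_eq, Complex.norm_real, Real.norm_eq_abs, abs_of_pos hz₀pos, hz₀lt]
      have hsval : ‖((z₀:ℝ):ℂ) - (a:ℂ)‖ = (1 - a^2)/(q + a) := by
        rw [show (((z₀:ℝ):ℂ) - (a:ℂ)) = ((z₀ - a : ℝ) : ℂ) by push_cast; ring,
          Complex.norm_real, Real.norm_eq_abs]
        rw [show z₀ - a = (1 - a^2)/(q+a) by rw [hz₀def]; field_simp; ring]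
        rw [abs_of_pos (div_pos h1a hden)]
      have hmval : ‖(1:ℂ) - (a:ℂ) * ((z₀:ℝ):ℂ)‖ = q * ((1 - a^2)/(q + a)) := by
        rw [show ((1:ℂ) - (a:ℂ) * ((z₀:ℝ):ℂ)) = ((1 - a * z₀ : ℝ) : ℂ) by push_cast; ring,
          Complex.norm_real, Real.norm_eq_abs]
        rw [show 1 - a * z₀ = q * ((1 - a^2)/(q+a)) by
          rw [hz₀def]; field_simp; ring]
        rw [abs_of_pos (mul_pos hq0 (div_pos h1a hden))]
      have hval : (1 - ‖((z₀:ℝ):ℂ)‖^2) * ‖deriv f ((z₀:ℝ):ℂ)‖ = 1 := by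
        rw [habs _ hmem, hsval, hmval]
        set s := (1 - a^2)/(q + a) with hsd
        have hs0 : 0 < s := div_pos h1a hden
        have e1 : (q*s)^2 - s^2 = 2 * s^2 := by linear_combination s^2 * hq3
        have e2 : (q*s)^3 = 3*q*s^3 := by
          have : q^3 = 3*q := by linear_combination q * hq3
          rw [mul_pow, this]
        rw [e1, e2]
        field_simp
      have : (1:ℝ) ∈ ((fun z : ℂ => (1 - (‖z‖)^2) * ‖deriv f z‖) ''
          ball (0:ℂ) 1) := ⟨((z₀:ℝ):ℂ), hmem, hval⟩
      exact hb this
  · -- part 3 : the majorant series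
    intro ha3 r hr0 hr1
    set C := 3 * Real.sqrt 3 / 4 with hC
    have hC0 : 0 < C := by
      have : 1 < Real.sqrt 3 := by
        nlinarith [Real.sq_sqrt (by norm_num : (3:ℝ) ≥ 0), Real.sqrt_nonneg 3]
      rw [hC]; linarith
    have hq3 : (Real.sqrt 3)^2 = 3 := Real.sq_sqrt (by norm_num)
    have hq0 : 0 < Real.sqrt 3 := by nlinarith
    have ha2 : a^2 < 1/3 := by
      have h' : a * Real.sqrt 3 < 1 := by
        rw [div_eq_mul_inv, one_mul] at ha3
        calc a * Real.sqrt 3 < (Real.sqrt 3)⁻¹ * Real.sqrt 3 := by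
              apply mul_lt_mul_of_pos_right ha3 hq0
          _ = 1 := inv_mul_cancel₀ (ne_of_gt hq0)
      nlinarith
    have h1a : 0 < 1 - a^2 := by nlinarith
    have h3a : 0 < 1 - 3*a^2 := by nlinarith
    set x := a * r with hx
    have hx0 : 0 ≤ x := by positivity
    have hx1 : x < 1 := by nlinarith
    set u : ℕ → ℝ := fun n => ‖A n‖ * r ^ n with hu
    set K1 := C * (1-a^2)^2 * r^2 with hK1
    set K2 := C * (1-a^2) * (1-3*a^2) * r^2 with hK2
    have habsA : ∀ n : ℕ, u (n+2) = K1 * ((n:ℝ) * x^n) + K2 * x^n := by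
      intro n
      have h2 : A (n+2) = ((C * (1-a^2) * (((n:ℝ)+2) * (1-a^2) - (1+a^2)) * a^n : ℝ) : ℂ) := by
        rw [hAn (n+2) (by omega)]
        push_cast [show n+2-2 = n from rfl]
        ring
      have hpos : 0 ≤ C * (1-a^2) * (((n:ℝ)+2) * (1-a^2) - (1+a^2)) * a^n := by
        have : 0 < ((n:ℝ)+2) * (1-a^2) - (1+a^2) := by
          have : (0:ℝ) ≤ (n:ℝ) := Nat.cast_nonneg n
          nlinarith
        positivity
      show ‖A (n+2)‖ * r ^ (n+2) = _
      rw [h2, Complex.norm_real, Real.norm_eq_abs, _root_.abs_of_nonneg hpos, hK1, hK2, hx]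
      ring
    have hs1 : Summable (fun n : ℕ => (n:ℝ) * x^n) := by
      have := (hasSum_coe_mul_geometric_of_norm_lt_one
        (r := x) (by rwa [Real.norm_eq_abs, _root_.abs_of_nonneg hx0])).summable
      simpa using this
    have hs2 : Summable (fun n : ℕ => x^n) := summable_geometric_of_lt_one hx0 hx1
    have hsv : Summable (fun n : ℕ => u (n+2)) := by
      apply Summable.congr (((hs1.mul_left K1).add (hs2.mul_left K2)))
      intro n
      exact (habsA n).symm
    have hsu : Summable u := by
      have := (summable_nat_add_iff (f := u) 2).mp hsv
      exact this
    have hsum2 : ∑' n : ℕ, u (n+2) = K1 * (x / (1-x)^2) + K2 * (1-x)⁻¹ := by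
      rw [tsum_congr habsA, Summable.tsum_add (hs1.mul_left K1) (hs2.mul_left K2),
        tsum_mul_left, tsum_mul_left,
        tsum_coe_mul_geometric_of_norm_lt_one
          (by rwa [Real.norm_eq_abs, _root_.abs_of_nonneg hx0]),
        tsum_geometric_of_lt_one hx0 hx1]
    have hu0 : u 0 = 0 := by simp [hu, hA0]
    have hu1 : u 1 = C * (2*a*(1-a^2)) * r := by
      show ‖A 1‖ * r ^ 1 = _
      rw [hA1, show ((C:ℝ):ℂ) * (-2 * (a:ℂ) * (1 - (a:ℂ)^2)) = ((-(C * (2*a*(1-a^2))) : ℝ) : ℂ)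
        by push_cast; ring, Complex.norm_real, Real.norm_eq_abs, abs_neg,
        _root_.abs_of_nonneg (by positivity : (0:ℝ) ≤ C * (2*a*(1-a^2)))]
      ring
    have hdec : ∑' n : ℕ, u n = u 0 + (u 1 + ∑' n : ℕ, u (n+2)) := by
      rw [Summable.tsum_eq_zero_add hsu]
      congr 1
      rw [Summable.tsum_eq_zero_add ((summable_nat_add_iff (k := 1) (f := u)).mpr hsu)]
    have hne : 1 - a * r ≠ 0 := by nlinarith
    calc ∑' n : ℕ, ‖A n‖ * r ^ n = u 0 + (u 1 + ∑' n : ℕ, u (n+2)) := hdec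
      _ = C * (((r - a) / (1 - a * r)) ^ 2 - a ^ 2 + 4 * a * (1 - a ^ 2) * r) := by
          rw [hu0, hu1, hsum2, hK1, hK2, hx]
          field_simp
          ring
end
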